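/- Let d ≥ 1, τ > 0, and let p ≥ 1 and 0 ≤ k ≤ p − 1 be integers. If K : ℝ × ℝ^d × ℝ^d → ℝ^d is p times continuously differentiable and x, y : ℝ → ℝ^d are k times continuously differentiable (continuous when k = 0), then I(t) := I_K[x,y](t) = ∫_{−τ}^0 K(θ, x(t+θ), y(t+θ)) dθ is (k+1) times continuously differentiable, and its first derivative is I'(t) = K(0, x(t), y(t)) − K(−τ, x(t−τ), y(t−τ)) − ∫_{−τ}^0 (∂₁K)(θ, x(t+θ), y(t+θ)) dθ, where ∂₁K denotes the partial derivative of K with respect to its first (scalar) argument. -/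

import Mathlib

open Real MeasureTheory intervalIntegral

section Helpers

variable {E : Type*} [NormedAddCommGroup E] [NormedSpace ℝ E]

noncomputable def pd1 (K : ℝ × E × E → E) : ℝ × E × E → E :=
  fun q => fderiv ℝ K q (1, 0, 0)

lemma hasDerivAt_slice {K : ℝ × E × E → E} (hK : ContDiff ℝ 1 K)
    (a b : E) (θ : ℝ) :
    HasDerivAt (fun s : ℝ => K (s, a, b)) (pd1 K (θ, a, b)) θ := by
  have h1 : HasDerivAt (fun s : ℝ => ((s, a, b) : ℝ × E × E)) (1, 0, 0) θ := by
    exact (hasDerivAt_id θ).prodMk (hasDerivAt_const θ ((a, b) : E × E))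
  have h2 := (hK.differentiable one_ne_zero (θ, a, b)).hasFDerivAt
  simpa [pd1, Function.comp_def] using h2.comp_hasDerivAt θ h1

lemma hasDerivAt_slice' {K : ℝ × E × E → E} (hK : ContDiff ℝ 1 K)
    (u : ℝ) (a b : E) (t : ℝ) :
    HasDerivAt (fun t : ℝ => K (u - t, a, b)) (-(pd1 K (u - t, a, b))) t := by
  have h1 : HasDerivAt (fun t : ℝ => ((u - t, a, b) : ℝ × E × E)) (-1, 0, 0) t := by
    exact ((hasDerivAt_id t).const_sub u).prodMk (hasDerivAt_const t ((a, b) : E × E))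
  have h2 := (hK.differentiable one_ne_zero (u - t, a, b)).hasFDerivAt
  have h3 := h2.comp_hasDerivAt t h1
  have e : fderiv ℝ K (u - t, a, b) (-1, (0 : E × E)) = -(pd1 K (u - t, a, b)) := by
    rw [show ((-1 : ℝ), (0 : E × E)) = -((1 : ℝ), (0 : E × E)) by simp [Prod.ext_iff], map_neg]
    rfl
  simpa [Function.comp_def, Prod.mk_zero_zero, e] using h3

lemma contDiff_pd1 {K : ℝ × E × E → E} {n : WithTop ℕ∞} (hK : ContDiff ℝ (n + 1) K) :
    ContDiff ℝ n (pd1 K) :=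
  (hK.fderiv_right le_rfl).clm_apply contDiff_const

lemma continuous_pd1 {K : ℝ × E × E → E} (hK : ContDiff ℝ 1 K) :
    Continuous (pd1 K) := by
  have : ContDiff ℝ 0 (pd1 K) := contDiff_pd1 (by simpa using hK)
  exact this.continuous

lemma integral_shift {τ : ℝ} (L : ℝ × E × E → E) (x y : ℝ → E) (t : ℝ) :
    (∫ θ in (-τ)..0, L (θ, x (t + θ), y (t + θ))) = ∫ u in (t - τ)..t, L (u - t, x u, y u) := by
  have h := intervalIntegral.integral_comp_add_left (a := -τ) (b := 0)
      (f := fun u => L (u - t, x u, y u)) t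
  simp only [add_sub_cancel_left] at h
  rw [h]
  congr 1 <;> ring

end Helpers

section Main

variable {E : Type*} [NormedAddCommGroup E] [NormedSpace ℝ E] [CompleteSpace E]

lemma hasDerivAt_I {τ : ℝ} (hτ : 0 < τ) {K : ℝ × E × E → E} (hK : ContDiff ℝ 1 K)
    {x y : ℝ → E} (hx : Continuous x) (hy : Continuous y) (t₀ : ℝ) :
    HasDerivAt (fun t : ℝ => ∫ θ in (-τ)..0, K (θ, x (t + θ), y (t + θ)))
      (K (0, x t₀, y t₀) - K (-τ, x (t₀ - τ), y (t₀ - τ))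
        - ∫ θ in (-τ)..0, pd1 K (θ, x (t₀ + θ), y (t₀ + θ))) t₀ := by
  have hKc : Continuous K := hK.continuous
  have hK1c : Continuous (pd1 K) := continuous_pd1 hK
  rw [show (fun t : ℝ => ∫ θ in (-τ)..0, K (θ, x (t + θ), y (t + θ)))
      = fun t => ∫ u in (t - τ)..t, K (u - t, x u, y u) from funext (integral_shift K x y),
    integral_shift (pd1 K) x y]
  have contf : ∀ s : ℝ, Continuous fun u => K (u - s, x u, y u) := fun s =>
    hKc.comp ((continuous_id.sub continuous_const).prodMk (hx.prodMk hy))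
  have contf1 : ∀ s : ℝ, Continuous fun u => pd1 K (u - s, x u, y u) := fun s =>
    hK1c.comp ((continuous_id.sub continuous_const).prodMk (hx.prodMk hy))
  have contΔ : ∀ t : ℝ, Continuous fun u => K (u - t, x u, y u) - K (u - t₀, x u, y u) :=
    fun t => (contf t).sub (contf t₀)
  obtain ⟨M, hM⟩ : ∃ M, ∀ (u s : ℝ), u ∈ Set.Icc (t₀ - τ - 1) (t₀ + 1) →
      s ∈ Set.Icc (t₀ - 1) (t₀ + 1) → ‖pd1 K (u - s, x u, y u)‖ ≤ M := by
    obtain ⟨M, hM⟩ := (isCompact_Icc.prod isCompact_Icc :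
        IsCompact (Set.Icc (t₀ - τ - 1) (t₀ + 1) ×ˢ Set.Icc (t₀ - 1) (t₀ + 1)))
      |>.exists_bound_of_continuousOn (f := fun p : ℝ × ℝ => pd1 K (p.1 - p.2, x p.1, y p.1))
        (Continuous.continuousOn
          (hK1c.comp ((continuous_fst.sub continuous_snd).prodMk
            ((hx.comp continuous_fst).prodMk (hy.comp continuous_fst)))))
    exact ⟨M, fun u s hu hs => hM (u, s) ⟨hu, hs⟩⟩
  have ht₀I : t₀ ∈ Set.Icc (t₀ - 1) (t₀ + 1) := by constructor <;> linarith
  have hM0 : 0 ≤ M :=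
    le_trans (norm_nonneg _) (hM t₀ t₀ ⟨by linarith, by linarith⟩ ht₀I)
  have hΔ : ∀ t ∈ Set.Icc (t₀ - 1) (t₀ + 1), ∀ u ∈ Set.Icc (t₀ - τ - 1) (t₀ + 1),
      ‖K (u - t, x u, y u) - K (u - t₀, x u, y u)‖ ≤ M * |t - t₀| := by
    intro t ht u hu
    have := (convex_Icc (t₀ - 1) (t₀ + 1)).norm_image_sub_le_of_norm_hasDerivWithin_le
      (f := fun s : ℝ => K (u - s, x u, y u)) (f' := fun s : ℝ => -(pd1 K (u - s, x u, y u)))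
      (fun s _ => (hasDerivAt_slice' hK u (x u) (y u) s).hasDerivWithinAt)
      (fun s hs => by simpa using hM u s hu hs) ht₀I ht
    simpa [Real.norm_eq_abs] using this
  set f₀ : ℝ → E := fun u => K (u - t₀, x u, y u) with hf₀def
  -- A part : fixed kernel, moving endpoints
  have hA : HasDerivAt (fun t => ∫ u in (t - τ)..t, f₀ u) (f₀ t₀ - f₀ (t₀ - τ)) t₀ := by
    have hP : ∀ s : ℝ, HasDerivAt (fun v => ∫ u in (0:ℝ)..v, f₀ u) (f₀ s) s := fun s =>
      intervalIntegral.integral_hasDerivAt_right ((contf t₀).intervalIntegrable _ _)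
        ((contf t₀).stronglyMeasurableAtFilter _ _) (contf t₀).continuousAt
    have h2 : HasDerivAt (fun t : ℝ => ∫ u in (0:ℝ)..(t - τ), f₀ u) (f₀ (t₀ - τ)) t₀ := by
      have := (hP (t₀ - τ)).scomp t₀ ((hasDerivAt_id t₀).sub_const τ)
      simpa [Function.comp_def] using this
    have h3 := (hP t₀).sub h2
    refine h3.congr_of_eventuallyEq (Filter.Eventually.of_forall fun t => ?_)
    exact (intervalIntegral.integral_interval_sub_left
      ((contf t₀).intervalIntegrable 0 t) ((contf t₀).intervalIntegrable 0 (t - τ))).symm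
  -- C part : differentiation under the integral sign, fixed endpoints
  have hC : HasDerivAt
      (fun t => ∫ u in (t₀ - τ)..t₀, (K (u - t, x u, y u) - K (u - t₀, x u, y u)))
      (-∫ u in (t₀ - τ)..t₀, pd1 K (u - t₀, x u, y u)) t₀ := by
    have hbound : ∀ᵐ u ∂(volume : Measure ℝ), u ∈ Set.uIoc (t₀ - τ) t₀ →
        ∀ t ∈ Metric.ball t₀ 1, ‖-(pd1 K (u - t, x u, y u))‖ ≤ M := by
      refine Filter.Eventually.of_forall fun u hu t ht => ?_
      rw [Set.uIoc_of_le (by linarith)] at hu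
      have ht' : |t - t₀| < 1 := by
        have := Metric.mem_ball.1 ht; rwa [Real.dist_eq] at this
      have h1 := abs_le.1 ht'.le
      rw [norm_neg]
      exact hM u t ⟨by linarith [hu.1], by linarith [hu.2]⟩ ⟨by linarith, by linarith⟩
    have key := intervalIntegral.hasDerivAt_integral_of_dominated_loc_of_deriv_le
      (μ := volume) (F := fun (t : ℝ) u => K (u - t, x u, y u) - K (u - t₀, x u, y u))
      (F' := fun (t : ℝ) u => -(pd1 K (u - t, x u, y u)))
      (x₀ := t₀) (a := t₀ - τ) (b := t₀) (bound := fun _ => M) (Metric.ball_mem_nhds t₀ one_pos)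
      (Filter.Eventually.of_forall fun t => ((contΔ t).aestronglyMeasurable).restrict)
      ((contΔ t₀).intervalIntegrable _ _)
      (((contf1 t₀).neg.aestronglyMeasurable).restrict)
      hbound
      intervalIntegrable_const
      (Filter.Eventually.of_forall fun u _ t _ =>
        (hasDerivAt_slice' hK u (x u) (y u) t).sub_const _)
    have h2 := key.2
    rwa [intervalIntegral.integral_neg] at h2
  -- R part : remainder has zero derivative
  set G : ℝ → E := fun t => ∫ u in (t - τ)..t, K (u - t, x u, y u) with hGdef
  set A : ℝ → E := fun t => ∫ u in (t - τ)..t, f₀ u with hAdef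
  set Cc : ℝ → E := fun t => ∫ u in (t₀ - τ)..t₀, (K (u - t, x u, y u) - K (u - t₀, x u, y u))
    with hCdef
  have key : ∀ t : ℝ, |t - t₀| ≤ 1 →
      ‖G t - (A t + Cc t)‖ ≤ 2 * (M * |t - t₀|) * |t - t₀| := by
    intro t ht
    have htI : t ∈ Set.Icc (t₀ - 1) (t₀ + 1) := by
      have := abs_le.1 ht; constructor <;> linarith [this.1, this.2]
    set Δ : ℝ → E := fun u => K (u - t, x u, y u) - K (u - t₀, x u, y u) with hΔdef
    have hΔc : Continuous Δ := contΔ t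
    have hGA : G t - A t = ∫ u in (t - τ)..t, Δ u := by
      rw [hGdef, hAdef]
      exact (intervalIntegral.integral_sub ((contf t).intervalIntegrable _ _)
        ((contf t₀).intervalIntegrable _ _)).symm
    have hsplit : (∫ u in (t - τ)..t, Δ u)
        = (∫ u in (t - τ)..(t₀ - τ), Δ u) + (∫ u in (t₀ - τ)..t₀, Δ u)
          + ∫ u in t₀..t, Δ u := by
      rw [intervalIntegral.integral_add_adjacent_intervals (hΔc.intervalIntegrable _ _)
        (hΔc.intervalIntegrable _ _),
        intervalIntegral.integral_add_adjacent_intervals (hΔc.intervalIntegrable _ _)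
        (hΔc.intervalIntegrable _ _)]
    have hrem : G t - (A t + Cc t)
        = (∫ u in (t - τ)..(t₀ - τ), Δ u) + ∫ u in t₀..t, Δ u := by
      have h' : G t - (A t + Cc t) = (G t - A t) - Cc t := by abel
      rw [h', hGA, hsplit, hCdef]
      abel
    have habs := abs_le.1 ht
    have hb1 : ∀ u ∈ Set.uIoc (t - τ) (t₀ - τ), ‖Δ u‖ ≤ M * |t - t₀| := by
      intro u hu
      rcases Set.mem_uIoc.1 hu with h | h <;>
        exact hΔ t htI u ⟨by linarith [h.1, h.2], by linarith [h.1, h.2]⟩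
    have hb2 : ∀ u ∈ Set.uIoc t₀ t, ‖Δ u‖ ≤ M * |t - t₀| := by
      intro u hu
      rcases Set.mem_uIoc.1 hu with h | h <;>
        exact hΔ t htI u ⟨by linarith [h.1, h.2], by linarith [h.1, h.2]⟩
    have b1 : ‖∫ u in (t - τ)..(t₀ - τ), Δ u‖ ≤ M * |t - t₀| * |t - t₀| := by
      have h' := intervalIntegral.norm_integral_le_of_norm_le_const hb1
      rwa [show t₀ - τ - (t - τ) = -(t - t₀) by ring, abs_neg] at h'
    have b2 : ‖∫ u in t₀..t, Δ u‖ ≤ M * |t - t₀| * |t - t₀| := by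
      simpa using intervalIntegral.norm_integral_le_of_norm_le_const hb2
    calc ‖G t - (A t + Cc t)‖
        = ‖(∫ u in (t - τ)..(t₀ - τ), Δ u) + ∫ u in t₀..t, Δ u‖ := by rw [hrem]
      _ ≤ ‖∫ u in (t - τ)..(t₀ - τ), Δ u‖ + ‖∫ u in t₀..t, Δ u‖ := norm_add_le _ _
      _ ≤ M * |t - t₀| * |t - t₀| + M * |t - t₀| * |t - t₀| := add_le_add b1 b2
      _ = 2 * (M * |t - t₀|) * |t - t₀| := by ring
  have hR : HasDerivAt (fun t => G t - (A t + Cc t)) 0 t₀ := by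
    rw [hasDerivAt_iff_isLittleO]
    have h0 : G t₀ - (A t₀ + Cc t₀) = 0 := by
      have h1 : G t₀ = A t₀ := rfl
      have h2 : Cc t₀ = 0 := by simp [hCdef]
      rw [h1, h2]; abel
    simp only [h0, sub_zero, smul_zero]
    rw [Asymptotics.isLittleO_iff]
    intro c hc
    have hδ : 0 < min 1 (c / (2 * M + 1)) := lt_min one_pos (by positivity)
    filter_upwards [Metric.ball_mem_nhds t₀ hδ] with t ht
    rw [Metric.mem_ball, Real.dist_eq] at ht
    have ht1 : |t - t₀| ≤ 1 := le_of_lt (lt_of_lt_of_le ht (min_le_left _ _))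
    have ht2 : |t - t₀| ≤ c / (2 * M + 1) := le_of_lt (lt_of_lt_of_le ht (min_le_right _ _))
    have h2 : 2 * (M * |t - t₀|) * |t - t₀| ≤ c * |t - t₀| := by
      have habs : 0 ≤ |t - t₀| := abs_nonneg _
      have h3 : 2 * M * |t - t₀| ≤ c := by
        calc 2 * M * |t - t₀| ≤ (2 * M + 1) * |t - t₀| := by nlinarith
          _ ≤ (2 * M + 1) * (c / (2 * M + 1)) := by nlinarith
          _ = c := by field_simp
      nlinarith
    calc ‖G t - (A t + Cc t)‖ ≤ 2 * (M * |t - t₀|) * |t - t₀| := key t ht1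
      _ ≤ c * |t - t₀| := h2
      _ = c * ‖t - t₀‖ := by rw [Real.norm_eq_abs]
  -- combine
  have hsum := (hA.add hC).add hR
  have hfun2 : (fun t => (A t + Cc t) + (G t - (A t + Cc t))) = G := by
    funext t; abel
  rw [show (A + Cc + fun t => G t - (A t + Cc t)) = G from hfun2] at hsum
  have hval : f₀ t₀ - f₀ (t₀ - τ) + -(∫ u in (t₀ - τ)..t₀, pd1 K (u - t₀, x u, y u)) + 0
      = K (0, x t₀, y t₀) - K (-τ, x (t₀ - τ), y (t₀ - τ))
        - ∫ u in (t₀ - τ)..t₀, pd1 K (u - t₀, x u, y u) := by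
    rw [hf₀def]
    simp only [sub_self]
    rw [show t₀ - τ - t₀ = -τ by ring]
    abel
  rw [hval] at hsum
  exact hsum

end Main

section Smooth

variable {E : Type*} [NormedAddCommGroup E] [NormedSpace ℝ E] [CompleteSpace E]

lemma contDiff_I {τ : ℝ} (hτ : 0 < τ) :
    ∀ (k : ℕ) (K : ℝ × E × E → E), ContDiff ℝ ((k : WithTop ℕ∞) + 1) K →
      ∀ (x y : ℝ → E), ContDiff ℝ (k : WithTop ℕ∞) x → ContDiff ℝ (k : WithTop ℕ∞) y →
      ContDiff ℝ ((k : WithTop ℕ∞) + 1)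
        (fun t : ℝ => ∫ θ in (-τ)..0, K (θ, x (t + θ), y (t + θ))) := by
  intro k
  induction k with
  | zero =>
    intro K hK x y hx hy
    have hK1 : ContDiff ℝ 1 K := by simpa using hK
    have hxc : Continuous x := hx.continuous
    have hyc : Continuous y := hy.continuous
    rw [show ((0 : ℕ) : WithTop ℕ∞) + 1 = 0 + 1 by norm_num, contDiff_succ_iff_deriv]
    refine ⟨fun t => (hasDerivAt_I hτ hK1 hxc hyc t).differentiableAt, by simp, ?_⟩
    have hderiv : deriv (fun t : ℝ => ∫ θ in (-τ)..0, K (θ, x (t + θ), y (t + θ)))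
        = fun t => K (0, x t, y t) - K (-τ, x (t - τ), y (t - τ))
            - ∫ θ in (-τ)..0, pd1 K (θ, x (t + θ), y (t + θ)) :=
      funext fun t => (hasDerivAt_I hτ hK1 hxc hyc t).deriv
    rw [hderiv, contDiff_zero]
    have c1 : Continuous fun t => K (0, x t, y t) :=
      hK1.continuous.comp (continuous_const.prodMk (hxc.prodMk hyc))
    have c2 : Continuous fun t => K (-τ, x (t - τ), y (t - τ)) :=
      hK1.continuous.comp (continuous_const.prodMk
        ((hxc.comp (continuous_id.sub continuous_const)).prodMk
          (hyc.comp (continuous_id.sub continuous_const))))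
    have c3 : Continuous fun t : ℝ => ∫ θ in (-τ)..0, pd1 K (θ, x (t + θ), y (t + θ)) := by
      apply intervalIntegral.continuous_parametric_intervalIntegral_of_continuous'
        (μ := volume) (f := fun (t : ℝ) (θ : ℝ) => pd1 K (θ, x (t + θ), y (t + θ)))
      exact (continuous_pd1 hK1).comp (continuous_snd.prodMk
        (((hxc.comp (continuous_fst.add continuous_snd))).prodMk
          (hyc.comp (continuous_fst.add continuous_snd))))
    exact (c1.sub c2).sub c3
  | succ m ih =>
    intro K hK x y hx hy
    have hK1 : ContDiff ℝ 1 K := hK.of_le (by push_cast; exact le_add_self)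
    have hxc : Continuous x := hx.continuous
    have hyc : Continuous y := hy.continuous
    rw [show ((m + 1 : ℕ) : WithTop ℕ∞) + 1 = ((m + 1 : ℕ) : WithTop ℕ∞) + 1 from rfl,
      contDiff_succ_iff_deriv]
    refine ⟨fun t => (hasDerivAt_I hτ hK1 hxc hyc t).differentiableAt, by simp, ?_⟩
    have hderiv : deriv (fun t : ℝ => ∫ θ in (-τ)..0, K (θ, x (t + θ), y (t + θ)))
        = fun t => K (0, x t, y t) - K (-τ, x (t - τ), y (t - τ))
            - ∫ θ in (-τ)..0, pd1 K (θ, x (t + θ), y (t + θ)) :=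
      funext fun t => (hasDerivAt_I hτ hK1 hxc hyc t).deriv
    rw [hderiv]
    have hKm : ContDiff ℝ ((m + 1 : ℕ) : WithTop ℕ∞) K := hK.of_le (by
      exact_mod_cast le_self_add)
    have c1 : ContDiff ℝ ((m + 1 : ℕ) : WithTop ℕ∞) (fun t => K (0, x t, y t)) :=
      hKm.comp (contDiff_const.prodMk (hx.prodMk hy))
    have c2 : ContDiff ℝ ((m + 1 : ℕ) : WithTop ℕ∞)
        (fun t => K (-τ, x (t - τ), y (t - τ))) :=
      hKm.comp (contDiff_const.prodMk
        (((hx.comp (contDiff_id.sub contDiff_const))).prodMk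
          (hy.comp (contDiff_id.sub contDiff_const))))
    have hpd : ContDiff ℝ ((m : WithTop ℕ∞) + 1) (pd1 K) := by
      apply contDiff_pd1
      have : ((m : WithTop ℕ∞) + 1) + 1 = ((m + 1 : ℕ) : WithTop ℕ∞) + 1 := by push_cast; ring
      rw [this]; exact hK
    have c3 := ih (pd1 K) hpd x y
      (hx.of_le (by exact_mod_cast Nat.le_succ m))
      (hy.of_le (by exact_mod_cast Nat.le_succ m))
    have c3' : ContDiff ℝ ((m + 1 : ℕ) : WithTop ℕ∞)
        (fun t : ℝ => ∫ θ in (-τ)..0, pd1 K (θ, x (t + θ), y (t + θ))) := by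
      have : (m : WithTop ℕ∞) + 1 = ((m + 1 : ℕ) : WithTop ℕ∞) := by push_cast; ring
      rw [← this]; exact c3
    exact (c1.sub c2).sub c3'

end Smooth

/-- If `K` is `p` times continuously differentiable and `x, y` are `k` times
continuously differentiable with `0 ≤ k ≤ p − 1`, then
`I(t) = ∫_{−τ}^0 K(θ, x(t+θ), y(t+θ)) dθ` is `(k+1)` times continuously
differentiable and
`I'(t) = K(0, x(t), y(t)) − K(−τ, x(t−τ), y(t−τ)) − ∫_{−τ}^0 ∂₁K(θ, x(t+θ), y(t+θ)) dθ`. -/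
theorem stmt4 (d p k : ℕ) (hd : 1 ≤ d) (hp : 1 ≤ p) (hk : k ≤ p - 1)
    (τ : ℝ) (hτ : 0 < τ)
    (K : ℝ × (Fin d → ℝ) × (Fin d → ℝ) → Fin d → ℝ) (hK : ContDiff ℝ p K)
    (x y : ℝ → Fin d → ℝ) (hx : ContDiff ℝ k x) (hy : ContDiff ℝ k y) :
    ContDiff ℝ (k + 1) (fun t : ℝ => ∫ θ in (-τ)..0, K (θ, x (t + θ), y (t + θ))) ∧
    ∀ t : ℝ, HasDerivAt (fun t : ℝ => ∫ θ in (-τ)..0, K (θ, x (t + θ), y (t + θ)))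
      (K (0, x t, y t) - K (-τ, x (t - τ), y (t - τ))
        - ∫ θ in (-τ)..0, deriv (fun s : ℝ => K (s, x (t + θ), y (t + θ))) θ) t := by
  have hkp : k + 1 ≤ p := by omega
  have hK' : ContDiff ℝ ((k : WithTop ℕ∞) + 1) K := by
    apply hK.of_le
    have : (((k + 1 : ℕ)) : WithTop ℕ∞) ≤ (p : WithTop ℕ∞) := by exact_mod_cast hkp
    push_cast at this
    exact this
  have hK1 : ContDiff ℝ 1 K := hK'.of_le le_add_self
  constructor
  · exact contDiff_I hτ k K hK' x y hx hy
  · intro t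
    have h := hasDerivAt_I hτ hK1 hx.continuous hy.continuous t
    have e : ∀ θ : ℝ, deriv (fun s : ℝ => K (s, x (t + θ), y (t + θ))) θ
        = pd1 K (θ, x (t + θ), y (t + θ)) := fun θ => (hasDerivAt_slice hK1 _ _ θ).deriv
    simp only [e]
    exact h
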